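/- Let μ̃ > 0. For every integer l ≥ 0 there is a constant C = C(l, μ̃) such that for all 0 ≤ s < t, ( ∫_0^∞ | (z∂_z)^l ∂_z ( e^{-z²/(4μ̃(t-s))} ) |² dz )^{1/2} ≤ C (t-s)^{-1/4}. -/

import Mathlib

open MeasureTheory Real Set

noncomputable section

/-- The operator `g ↦ z ∂_z g`. -/
def Zd (g : ℝ → ℝ) : ℝ → ℝ := fun z => z * deriv g z

/-- The polynomial transformation underlying the action of `Zd` on Gaussians. -/
def Tp (p : Polynomial ℝ) : Polynomial ℝ :=
  p - 2 * Polynomial.X * p + 2 * Polynomial.X * Polynomial.derivative p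

lemma poly_bound (p : Polynomial ℝ) : ∃ M > 0, ∀ u : ℝ, 0 ≤ u →
    |p.eval u| ≤ M * Real.exp (u / 2) := by
  classical
  set n := p.natDegree + 1
  refine ⟨(∑ i ∈ Finset.range n, |p.coeff i| * 2 ^ i * i.factorial) + 1, by positivity, ?_⟩
  intro u hu
  have hexp : (0:ℝ) < Real.exp (u / 2) := Real.exp_pos _
  have h1 : |p.eval u| ≤ ∑ i ∈ Finset.range n, |p.coeff i| * u ^ i := by
    rw [Polynomial.eval_eq_sum_range]
    refine (Finset.abs_sum_le_sum_abs _ _).trans ?_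
    refine Finset.sum_le_sum fun i _ => ?_
    rw [abs_mul, abs_pow, abs_of_nonneg hu]
  have h2 : ∀ i : ℕ, u ^ i ≤ 2 ^ i * i.factorial * Real.exp (u / 2) := by
    intro i
    have h := Real.pow_div_factorial_le_exp (x := u / 2) (by positivity) i
    have h3 : (u / 2) ^ i ≤ (i.factorial : ℝ) * Real.exp (u / 2) := by
      rw [div_le_iff₀ (by positivity : (0:ℝ) < (i.factorial : ℝ))] at h
      linarith [h]
    calc u ^ i = 2 ^ i * (u / 2) ^ i := by rw [← mul_pow]; ring_nf
      _ ≤ 2 ^ i * ((i.factorial : ℝ) * Real.exp (u / 2)) :=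
          mul_le_mul_of_nonneg_left h3 (by positivity)
      _ = 2 ^ i * i.factorial * Real.exp (u / 2) := by ring
  calc |p.eval u| ≤ ∑ i ∈ Finset.range n, |p.coeff i| * u ^ i := h1
    _ ≤ ∑ i ∈ Finset.range n, |p.coeff i| * (2 ^ i * i.factorial * Real.exp (u / 2)) :=
        Finset.sum_le_sum fun i _ => mul_le_mul_of_nonneg_left (h2 i) (abs_nonneg _)
    _ = (∑ i ∈ Finset.range n, |p.coeff i| * 2 ^ i * i.factorial) * Real.exp (u / 2) := by
        rw [Finset.sum_mul]; exact Finset.sum_congr rfl fun i _ => by ring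
    _ ≤ ((∑ i ∈ Finset.range n, |p.coeff i| * 2 ^ i * i.factorial) + 1) * Real.exp (u / 2) := by
        nlinarith [hexp]

lemma key_formula (a : ℝ) (ha : 0 < a) (l : ℕ) (z : ℝ) :
    Zd^[l] (deriv fun w => Real.exp (-(w ^ 2) / a)) z
      = 1 / a * z * Real.exp (-(z ^ 2) / a) * (Tp^[l] (Polynomial.C (-2))).eval (z ^ 2 / a) := by
  have ha' : a ≠ 0 := ne_of_gt ha
  have hexp : ∀ x : ℝ, HasDerivAt (fun w : ℝ => Real.exp (-(w ^ 2) / a))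
      (Real.exp (-(x ^ 2) / a) * (-(2 * x) / a)) x := by
    intro x
    have h0 : HasDerivAt (fun w : ℝ => -(w ^ 2) / a) (-(2 * x) / a) x := by
      have := ((hasDerivAt_pow 2 x).neg).div_const a
      simpa [pow_one] using this
    exact h0.exp
  induction l generalizing z with
  | zero =>
      simp only [Function.iterate_zero, id_eq, Polynomial.eval_C]
      rw [(hexp z).deriv]
      ring
  | succ l ih =>
      rw [Function.iterate_succ_apply' Zd, Function.iterate_succ_apply' Tp]
      set p := Tp^[l] (Polynomial.C (-2)) with hp
      have hfun : Zd^[l] (deriv fun w => Real.exp (-(w ^ 2) / a))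
          = fun z => 1 / a * z * Real.exp (-(z ^ 2) / a) * p.eval (z ^ 2 / a) := funext ih
      show z * deriv (Zd^[l] (deriv fun w => Real.exp (-(w ^ 2) / a))) z = _
      rw [hfun]
      have h0 : HasDerivAt (fun z : ℝ => z ^ 2 / a) (2 * z / a) z := by
        have := (hasDerivAt_pow 2 z).div_const a
        simpa [pow_one] using this
      have h3 : HasDerivAt (fun z : ℝ => p.eval (z ^ 2 / a))
          (Polynomial.eval (z ^ 2 / a) (Polynomial.derivative p) * (2 * z / a)) z :=
        by have := (p.hasDerivAt (z ^ 2 / a)).comp z h0; exact this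
      have h1 : HasDerivAt (fun z : ℝ => 1 / a * z) (1 / a) z := by
        simpa using (hasDerivAt_id z).const_mul (1 / a)
      have hmain := (h1.mul (hexp z)).mul h3
      rw [show deriv (fun z => 1 / a * z * Real.exp (-(z ^ 2) / a) * p.eval (z ^ 2 / a)) z = _ from hmain.deriv]
      simp only [Tp, Polynomial.eval_add, Polynomial.eval_sub, Polynomial.eval_mul,
        Polynomial.eval_X, Polynomial.eval_ofNat, Pi.mul_apply]
      field_simp
      ring

/-- Let `μ̃ > 0`.  For every integer `l ≥ 0` there is a constant
`C = C(l, μ̃)` such that for all `0 ≤ s < t`,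
`‖(z∂_z)^l ∂_z (e^{-z²/(4μ̃(t-s))})‖_{L²(0,∞)} ≤ C (t-s)^{-1/4}`. -/
theorem heat_kernel_L2_bound (μ : ℝ) (hμ : 0 < μ) (l : ℕ) :
    ∃ C > 0, ∀ s t : ℝ, 0 ≤ s → s < t →
      (∫ z in Ioi (0 : ℝ),
          (Zd^[l] (deriv fun w => Real.exp (-(w ^ 2) / (4 * μ * (t - s)))) z) ^ 2)
          ^ (1 / 2 : ℝ)
        ≤ C * (t - s) ^ (-(1 / 4) : ℝ) := by
  obtain ⟨M, hM, hMb⟩ := poly_bound (Tp^[l] (Polynomial.C (-2)))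
  refine ⟨(M ^ 2 * Real.sqrt (2 * π)) ^ (1 / 2 : ℝ) * (4 * μ) ^ (-(1 / 4) : ℝ),
    by positivity, ?_⟩
  intro s t hs hst
  set τ := t - s with hτdef
  have hτ : 0 < τ := sub_pos.mpr hst
  set a := 4 * μ * τ with hadef
  have ha : 0 < a := by positivity
  clear_value τ a
  set p := Tp^[l] (Polynomial.C (-2)) with hpdef
  -- pointwise bound on the integrand
  have hpt : ∀ z : ℝ,
      (1 / a * z * Real.exp (-(z ^ 2) / a) * p.eval (z ^ 2 / a)) ^ 2
        ≤ 2 * M ^ 2 / a * Real.exp (-(1 / (2 * a)) * z ^ 2) := by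
    intro z
    set u := z ^ 2 / a with hu
    have hu0 : 0 ≤ u := by positivity
    clear_value u
    have hz2 : z ^ 2 = a * u := by rw [hu]; field_simp
    have hP2 : (p.eval u) ^ 2 ≤ M ^ 2 * Real.exp u := by
      calc (p.eval u) ^ 2 = |p.eval u| ^ 2 := (sq_abs _).symm
        _ ≤ (M * Real.exp (u / 2)) ^ 2 := pow_le_pow_left₀ (abs_nonneg _) (hMb u hu0) 2
        _ = M ^ 2 * (Real.exp (u / 2) * Real.exp (u / 2)) := by ring
        _ = M ^ 2 * Real.exp u := by rw [← Real.exp_add]; norm_num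
    have hue : u ≤ 2 * Real.exp (u / 2) := by
      have := Real.add_one_le_exp (u / 2)
      linarith
    have e1 : Real.exp (-(z ^ 2) / a) = Real.exp (-u) := by rw [hu]; ring_nf
    have e2 : Real.exp (-(1 / (2 * a)) * z ^ 2) = Real.exp (-(u / 2)) := by
      congr 1
      rw [hu]; field_simp
    have hA : Real.exp (-u) ^ 2 * Real.exp u = Real.exp (-u) := by
      rw [sq, mul_assoc, ← Real.exp_add, ← Real.exp_add]; ring_nf
    have hC : Real.exp (u / 2) * Real.exp (-u) = Real.exp (-(u / 2)) := by
      rw [← Real.exp_add]; ring_nf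
    calc (1 / a * z * Real.exp (-(z ^ 2) / a) * p.eval u) ^ 2
        = u / a * Real.exp (-u) ^ 2 * (p.eval u) ^ 2 := by
          rw [e1]; rw [show (1 / a * z * Real.exp (-u) * p.eval u) ^ 2
            = 1 / a ^ 2 * z ^ 2 * Real.exp (-u) ^ 2 * (p.eval u) ^ 2 by ring, hz2]
          field_simp
      _ ≤ u / a * Real.exp (-u) ^ 2 * (M ^ 2 * Real.exp u) :=
          mul_le_mul_of_nonneg_left hP2 (by positivity)
      _ = M ^ 2 / a * (u * Real.exp (-u)) := by
          rw [show u / a * Real.exp (-u) ^ 2 * (M ^ 2 * Real.exp u)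
            = M ^ 2 / a * (u * (Real.exp (-u) ^ 2 * Real.exp u)) by ring, hA]
      _ ≤ M ^ 2 / a * (2 * Real.exp (u / 2) * Real.exp (-u)) := by
          refine mul_le_mul_of_nonneg_left ?_ (by positivity)
          have := mul_le_mul_of_nonneg_right hue (Real.exp_pos (-u)).le
          linarith [this]
      _ = 2 * M ^ 2 / a * Real.exp (-(u / 2)) := by
          rw [show M ^ 2 / a * (2 * Real.exp (u / 2) * Real.exp (-u))
            = 2 * M ^ 2 / a * (Real.exp (u / 2) * Real.exp (-u)) by ring, hC]
      _ = 2 * M ^ 2 / a * Real.exp (-(1 / (2 * a)) * z ^ 2) := by rw [e2]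
  have I0 : (0:ℝ) ≤ ∫ z in Ioi (0 : ℝ),
      (Zd^[l] (deriv fun w => Real.exp (-(w ^ 2) / a)) z) ^ 2 :=
    integral_nonneg fun z => sq_nonneg _
  have hmono : (∫ z in Ioi (0 : ℝ),
        (Zd^[l] (deriv fun w => Real.exp (-(w ^ 2) / a)) z) ^ 2)
      ≤ ∫ z in Ioi (0 : ℝ), 2 * M ^ 2 / a * Real.exp (-(1 / (2 * a)) * z ^ 2) := by
    refine integral_mono_of_nonneg (Filter.Eventually.of_forall fun z => sq_nonneg _)
      (((integrable_exp_neg_mul_sq (by positivity : (0:ℝ) < 1 / (2 * a))).integrableOn).const_mul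
        _) (Filter.Eventually.of_forall fun z => ?_)
    simp only [key_formula a ha l]
    exact hpt z
  have hgauss : (∫ z in Ioi (0 : ℝ), 2 * M ^ 2 / a * Real.exp (-(1 / (2 * a)) * z ^ 2))
      = M ^ 2 * Real.sqrt (2 * π) * a ^ (-(1 / 2) : ℝ) := by
    rw [MeasureTheory.integral_const_mul, integral_gaussian_Ioi,
      show π / (1 / (2 * a)) = 2 * π * a by field_simp,
      Real.sqrt_mul (by positivity : (0:ℝ) ≤ 2 * π),
      Real.rpow_neg ha.le, ← Real.sqrt_eq_rpow]
    have hsq : Real.sqrt a * Real.sqrt a = a := Real.mul_self_sqrt ha.le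
    have hs0 : Real.sqrt a ≠ 0 := by positivity
    field_simp
    linear_combination hsq
  calc (∫ z in Ioi (0 : ℝ),
        (Zd^[l] (deriv fun w => Real.exp (-(w ^ 2) / a)) z) ^ 2) ^ (1 / 2 : ℝ)
      ≤ (M ^ 2 * Real.sqrt (2 * π) * a ^ (-(1 / 2) : ℝ)) ^ (1 / 2 : ℝ) :=
        Real.rpow_le_rpow I0 (hmono.trans_eq hgauss) (by norm_num)
    _ = (M ^ 2 * Real.sqrt (2 * π)) ^ (1 / 2 : ℝ) * a ^ (-(1 / 4) : ℝ) := by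
        rw [Real.mul_rpow (by positivity) (by positivity), ← Real.rpow_mul ha.le]
        norm_num
    _ = (M ^ 2 * Real.sqrt (2 * π)) ^ (1 / 2 : ℝ)
          * ((4 * μ) ^ (-(1 / 4) : ℝ) * τ ^ (-(1 / 4) : ℝ)) := by
        rw [hadef, Real.mul_rpow (by positivity) hτ.le]
    _ = (M ^ 2 * Real.sqrt (2 * π)) ^ (1 / 2 : ℝ) * (4 * μ) ^ (-(1 / 4) : ℝ)
          * τ ^ (-(1 / 4) : ℝ) := by ring

end
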